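/- arXiv:2311.17209 — 2 statements merged into one kernel-verified Lean document; each statement's English description precedes it below -/
import Mathlib

section
/- In the octonion projective plane, the unique line of the form ⟨e₁,1,e₂⟩ through B'=[-1,j,1] and C'=[k,-k,1] has e₁ = 1/2 + (1/2)j + (1/2)k + (1/2)I and e₂ = 1/2 - (1/2)j + (1/2)k + (1/2)I, and its intersection with the line x₁=0 is the point P = [0, -1/2 + (1/2)j - (1/2)k - (1/2)I, 1]. -/
/-- The octonions: 8-dimensional real Cayley–Dickson algebra with basis
`1, i, j, k, l, I, J, K` and the standard multiplication table
(`i·j = l`, `i·k = K`, `j·k = I`, etc.). -/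
structure Oct where
  re : ℝ
  i : ℝ
  j : ℝ
  k : ℝ
  l : ℝ
  I : ℝ
  J : ℝ
  K : ℝ

namespace Oct

/-- Build an octonion from its eight real coordinates (in order `re i j k l I J K`). -/
def o (re i j k l I J K : ℝ) : Oct := ⟨re, i, j, k, l, I, J, K⟩

instance : Zero Oct := ⟨o 0 0 0 0 0 0 0 0⟩
instance : One Oct := ⟨o 1 0 0 0 0 0 0 0⟩

def iu : Oct := o 0 1 0 0 0 0 0 0
def ju : Oct := o 0 0 1 0 0 0 0 0
def ku : Oct := o 0 0 0 1 0 0 0 0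
def lu : Oct := o 0 0 0 0 1 0 0 0
def Iu : Oct := o 0 0 0 0 0 1 0 0
def Ju : Oct := o 0 0 0 0 0 0 1 0
def Ku : Oct := o 0 0 0 0 0 0 0 1

instance : Add Oct :=
  ⟨fun x y => o (x.re + y.re) (x.i + y.i) (x.j + y.j) (x.k + y.k)
      (x.l + y.l) (x.I + y.I) (x.J + y.J) (x.K + y.K)⟩
instance : Neg Oct :=
  ⟨fun x => o (-x.re) (-x.i) (-x.j) (-x.k) (-x.l) (-x.I) (-x.J) (-x.K)⟩
instance : Sub Oct := ⟨fun x y => x + -y⟩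

/-- Multiplication according to the standard Cayley–Dickson table
(rows × columns): `i·j = l`, `i·k = K`, `j·k = I`, `i·l = -j`, `i·I = J`,
`i·J = -I`, `i·K = -k`, `j·l = i`, `j·I = -k`, `j·J = K`, `j·K = -J`,
`k·l = J`, `k·I = j`, `k·J = -l`, `k·K = i`, `l·I = K`, `l·J = k`,
`l·K = -I`, `I·J = i`, `I·K = l`, `J·K = j`, all units squaring to `-1`
and anticommuting pairwise. -/
instance : Mul Oct :=
  ⟨fun x y => o
    (x.re*y.re - x.i*y.i - x.j*y.j - x.k*y.k - x.l*y.l - x.I*y.I - x.J*y.J - x.K*y.K)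
    (x.re*y.i + x.i*y.re + x.j*y.l - x.l*y.j + x.k*y.K - x.K*y.k + x.I*y.J - x.J*y.I)
    (x.re*y.j + x.j*y.re - x.i*y.l + x.l*y.i + x.k*y.I - x.I*y.k + x.J*y.K - x.K*y.J)
    (x.re*y.k + x.k*y.re - x.i*y.K + x.K*y.i - x.j*y.I + x.I*y.j + x.l*y.J - x.J*y.l)
    (x.re*y.l + x.l*y.re + x.i*y.j - x.j*y.i - x.k*y.J + x.J*y.k + x.I*y.K - x.K*y.I)
    (x.re*y.I + x.I*y.re + x.j*y.k - x.k*y.j - x.i*y.J + x.J*y.i - x.l*y.K + x.K*y.l)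
    (x.re*y.J + x.J*y.re + x.i*y.I - x.I*y.i + x.k*y.l - x.l*y.k - x.j*y.K + x.K*y.j)
    (x.re*y.K + x.K*y.re + x.i*y.k - x.k*y.i + x.j*y.J - x.J*y.j + x.l*y.I - x.I*y.l)⟩

/-- Octonion conjugation. -/
def conj (x : Oct) : Oct := o x.re (-x.i) (-x.j) (-x.k) (-x.l) (-x.I) (-x.J) (-x.K)

/-- The squared norm `|x|²`. -/
def normSq (x : Oct) : ℝ :=
  x.re^2 + x.i^2 + x.j^2 + x.k^2 + x.l^2 + x.I^2 + x.J^2 + x.K^2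

/-- Inverse: `x⁻¹ = conj x / |x|²` (and `0⁻¹ = 0`). -/
noncomputable instance : Inv Oct :=
  ⟨fun x => o (x.re / normSq x) (-x.i / normSq x) (-x.j / normSq x) (-x.k / normSq x)
      (-x.l / normSq x) (-x.I / normSq x) (-x.J / normSq x) (-x.K / normSq x)⟩

end Oct

open Oct

/-- Homogeneous coordinate triples over the octonions. -/
abbrev O3 := Oct × Oct × Oct

/-- Incidence of the point `[x₁,x₂,x₃]` with the line `⟨a₁,a₂,a₃⟩`:
`x₁a₁ + x₂a₂ + x₃a₃ = 0`. -/
def incid (x m : O3) : Prop := x.1 * m.1 + x.2.1 * m.2.1 + x.2.2 * m.2.2 = 0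

/-- `x` is a point of the octonion projective plane: of the form `[x,y,1]`, `[1,x,0]` or `[0,1,0]`. -/
def isPt (x : O3) : Prop :=
  (∃ a b : Oct, x = (a, b, 1)) ∨ (∃ a : Oct, x = (1, a, 0)) ∨ x = (0, 1, 0)

/-- `m` is a line of the octonion projective plane: of the form `⟨a,1,b⟩`, `⟨1,0,a⟩` or `⟨0,0,1⟩`. -/
def isLn (m : O3) : Prop :=
  (∃ a b : Oct, m = (a, 1, b)) ∨ (∃ a : Oct, m = (1, 0, a)) ∨ m = (0, 0, 1)

/-- Three points are collinear if some line of the plane is incident with all of them. -/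
def Collinear3 (X Y Z : O3) : Prop := ∃ m : O3, isLn m ∧ incid X m ∧ incid Y m ∧ incid Z m

/-- Three lines are concurrent if some point of the plane is incident with all of them. -/
def Concurrent3 (m n p : O3) : Prop := ∃ X : O3, isPt X ∧ incid X m ∧ incid X n ∧ incid X p


namespace Oct
lemma mul_def (x y : Oct) : x * y = o
    (x.re*y.re - x.i*y.i - x.j*y.j - x.k*y.k - x.l*y.l - x.I*y.I - x.J*y.J - x.K*y.K)
    (x.re*y.i + x.i*y.re + x.j*y.l - x.l*y.j + x.k*y.K - x.K*y.k + x.I*y.J - x.J*y.I)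
    (x.re*y.j + x.j*y.re - x.i*y.l + x.l*y.i + x.k*y.I - x.I*y.k + x.J*y.K - x.K*y.J)
    (x.re*y.k + x.k*y.re - x.i*y.K + x.K*y.i - x.j*y.I + x.I*y.j + x.l*y.J - x.J*y.l)
    (x.re*y.l + x.l*y.re + x.i*y.j - x.j*y.i - x.k*y.J + x.J*y.k + x.I*y.K - x.K*y.I)
    (x.re*y.I + x.I*y.re + x.j*y.k - x.k*y.j - x.i*y.J + x.J*y.i - x.l*y.K + x.K*y.l)
    (x.re*y.J + x.J*y.re + x.i*y.I - x.I*y.i + x.k*y.l - x.l*y.k - x.j*y.K + x.K*y.j)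
    (x.re*y.K + x.K*y.re + x.i*y.k - x.k*y.i + x.j*y.J - x.J*y.j + x.l*y.I - x.I*y.l) := rfl
lemma add_def (x y : Oct) : x + y = o (x.re + y.re) (x.i + y.i) (x.j + y.j) (x.k + y.k)
    (x.l + y.l) (x.I + y.I) (x.J + y.J) (x.K + y.K) := rfl
lemma neg_def (x : Oct) : -x = o (-x.re) (-x.i) (-x.j) (-x.k) (-x.l) (-x.I) (-x.J) (-x.K) := rfl
lemma one_def : (1 : Oct) = o 1 0 0 0 0 0 0 0 := rfl
lemma zero_def : (0 : Oct) = o 0 0 0 0 0 0 0 0 := rfl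
end Oct

set_option maxHeartbeats 2000000 in
/-- The unique line `⟨e₁,1,e₂⟩` through `B' = [-1,j,1]` and `C' = [k,-k,1]` has
`e₁ = 1/2 + (1/2)j + (1/2)k + (1/2)I` and `e₂ = 1/2 - (1/2)j + (1/2)k + (1/2)I`,
and its intersection with the line `x₁ = 0` (i.e. `⟨1,0,0⟩`) is
`P = [0, -1/2 + (1/2)j - (1/2)k - (1/2)I, 1]`. -/


theorem stmt7 :
    (∀ e₁ e₂ : Oct,
      (incid (-(1 : Oct), ju, (1 : Oct)) (e₁, 1, e₂) ∧
       incid (ku, -ku, (1 : Oct)) (e₁, 1, e₂)) ↔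
      (e₁ = o (1/2) 0 (1/2) (1/2) 0 (1/2) 0 0 ∧
       e₂ = o (1/2) 0 (-(1/2)) (1/2) 0 (1/2) 0 0)) ∧
    incid ((0 : Oct), o (-(1/2)) 0 (1/2) (-(1/2)) 0 (-(1/2)) 0 0, (1 : Oct))
      (o (1/2) 0 (1/2) (1/2) 0 (1/2) 0 0, 1, o (1/2) 0 (-(1/2)) (1/2) 0 (1/2) 0 0) ∧
    incid ((0 : Oct), o (-(1/2)) 0 (1/2) (-(1/2)) 0 (-(1/2)) 0 0, (1 : Oct))
      ((1 : Oct), (0 : Oct), (0 : Oct)) ∧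
    (∀ y : Oct,
      incid ((0 : Oct), y, (1 : Oct))
        (o (1/2) 0 (1/2) (1/2) 0 (1/2) 0 0, 1, o (1/2) 0 (-(1/2)) (1/2) 0 (1/2) 0 0) →
      y = o (-(1/2)) 0 (1/2) (-(1/2)) 0 (-(1/2)) 0 0) := by
  refine ⟨fun e₁ e₂ => ?_, ?_, ?_, fun y h => ?_⟩
  · obtain ⟨r1,i1,j1,k1,l1,I1,J1,K1⟩ := e₁
    obtain ⟨r2,i2,j2,k2,l2,I2,J2,K2⟩ := e₂
    simp only [incid, ju, ku, Oct.mul_def, Oct.add_def, Oct.neg_def, Oct.one_def, Oct.zero_def, o, Oct.mk.injEq]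
    constructor
    · rintro ⟨⟨h1,h2,h3,h4,h5,h6,h7,h8⟩,⟨g1,g2,g3,g4,g5,g6,g7,g8⟩⟩
      ring_nf at h1 h2 h3 h4 h5 h6 h7 h8 g1 g2 g3 g4 g5 g6 g7 g8 ⊢
      refine ⟨⟨?_,?_,?_,?_,?_,?_,?_,?_⟩,⟨?_,?_,?_,?_,?_,?_,?_,?_⟩⟩ <;> linarith
    · rintro ⟨⟨h1,h2,h3,h4,h5,h6,h7,h8⟩,⟨g1,g2,g3,g4,g5,g6,g7,g8⟩⟩
      ring_nf at h1 h2 h3 h4 h5 h6 h7 h8 g1 g2 g3 g4 g5 g6 g7 g8 ⊢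
      refine ⟨⟨?_,?_,?_,?_,?_,?_,?_,?_⟩,⟨?_,?_,?_,?_,?_,?_,?_,?_⟩⟩ <;> linarith
  · simp only [incid, ju, ku, Oct.mul_def, Oct.add_def, Oct.neg_def, Oct.one_def, Oct.zero_def, o, Oct.mk.injEq]; norm_num
  · simp only [incid, ju, ku, Oct.mul_def, Oct.add_def, Oct.neg_def, Oct.one_def, Oct.zero_def, o, Oct.mk.injEq]; norm_num
  · obtain ⟨r,i1,j1,k1,l1,I1,J1,K1⟩ := y
    simp only [incid, ju, ku, Oct.mul_def, Oct.add_def, Oct.neg_def, Oct.one_def, Oct.zero_def, o, Oct.mk.injEq] at h ⊢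
    obtain ⟨h1,h2,h3,h4,h5,h6,h7,h8⟩ := h
    refine ⟨?_,?_,?_,?_,?_,?_,?_,?_⟩ <;> linarith
end

section
/- In any projective plane, the converse Bricard property holds if and only if the Bricard property holds in the dual plane; i.e., the dual statement of the Bricard property is the converse Bricard property. -/
/-- An abstract projective plane with point type `Pt` and line type `Ln`:
any two distinct points lie on a unique line, any two distinct lines meet in a unique
point, and there are four points no three of which are collinear. -/
structure ProjectivePlane (Pt Ln : Type*) where
  incid : Pt → Ln → Prop
  join_unique : ∀ A B : Pt, A ≠ B → ∃! m : Ln, incid A m ∧ incid B m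
  meet_unique : ∀ m n : Ln, m ≠ n → ∃! A : Pt, incid A m ∧ incid A n
  nondeg : ∃ A B C D : Pt, ∀ m : Ln,
    ¬(incid A m ∧ incid B m ∧ incid C m) ∧ ¬(incid A m ∧ incid B m ∧ incid D m) ∧
    ¬(incid A m ∧ incid C m ∧ incid D m) ∧ ¬(incid B m ∧ incid C m ∧ incid D m)

namespace ProjectivePlane

variable {Pt Ln : Type*} (PP : ProjectivePlane Pt Ln)

/-- Three noncollinear points (a triangle). -/
def Triangle (A B C : Pt) : Prop := ∀ m : Ln, ¬(PP.incid A m ∧ PP.incid B m ∧ PP.incid C m)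

/-- Three collinear points. -/
def Collin (X Y Z : Pt) : Prop := ∃ m : Ln, PP.incid X m ∧ PP.incid Y m ∧ PP.incid Z m

/-- Three concurrent lines. -/
def Concur (m n p : Ln) : Prop := ∃ O : Pt, PP.incid O m ∧ PP.incid O n ∧ PP.incid O p

/-- The Bricard configuration for triangles `ABC`, `A'B'C'`: `bc, ca, ab, bc', ca', ab'`
are the sides, `aa', bb', cc'` the joins of corresponding vertices,
`P = BC ∩ B'C'`, `Q = AC ∩ A'C'`, `R = AB ∩ A'B'`, `D = BC ∩ AA'`, `E = AC ∩ BB'`,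
`F = AB ∩ CC'`, and `pa = A'P`, `qb = B'Q`, `rc = C'R`. -/
def BricardConfig (A B C A' B' C' : Pt) (bc ca ab bc' ca' ab' aa' bb' cc' : Ln)
    (P Q R D E F : Pt) (pa qb rc : Ln) : Prop :=
  PP.Triangle A B C ∧ PP.Triangle A' B' C' ∧
  PP.incid B bc ∧ PP.incid C bc ∧ PP.incid C ca ∧ PP.incid A ca ∧
  PP.incid A ab ∧ PP.incid B ab ∧
  PP.incid B' bc' ∧ PP.incid C' bc' ∧ PP.incid C' ca' ∧ PP.incid A' ca' ∧
  PP.incid A' ab' ∧ PP.incid B' ab' ∧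
  PP.incid A aa' ∧ PP.incid A' aa' ∧ PP.incid B bb' ∧ PP.incid B' bb' ∧
  PP.incid C cc' ∧ PP.incid C' cc' ∧
  PP.incid P bc ∧ PP.incid P bc' ∧ PP.incid Q ca ∧ PP.incid Q ca' ∧
  PP.incid R ab ∧ PP.incid R ab' ∧
  PP.incid D bc ∧ PP.incid D aa' ∧ PP.incid E ca ∧ PP.incid E bb' ∧
  PP.incid F ab ∧ PP.incid F cc' ∧
  PP.incid A' pa ∧ PP.incid P pa ∧ PP.incid B' qb ∧ PP.incid Q qb ∧
  PP.incid C' rc ∧ PP.incid R rc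

/-- The Bricard property: in every Bricard configuration, if `A'P`, `B'Q`, `C'R` are
concurrent then `D`, `E`, `F` are collinear. -/
def Bricard : Prop :=
  ∀ (A B C A' B' C' : Pt) (bc ca ab bc' ca' ab' aa' bb' cc' : Ln)
    (P Q R D E F : Pt) (pa qb rc : Ln),
    PP.BricardConfig A B C A' B' C' bc ca ab bc' ca' ab' aa' bb' cc' P Q R D E F pa qb rc →
    PP.Concur pa qb rc → PP.Collin D E F

/-- The converse Bricard property: in every Bricard configuration, if `D`, `E`, `F` are
collinear then `A'P`, `B'Q`, `C'R` are concurrent. -/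
def ConverseBricard : Prop :=
  ∀ (A B C A' B' C' : Pt) (bc ca ab bc' ca' ab' aa' bb' cc' : Ln)
    (P Q R D E F : Pt) (pa qb rc : Ln),
    PP.BricardConfig A B C A' B' C' bc ca ab bc' ca' ab' aa' bb' cc' P Q R D E F pa qb rc →
    PP.Collin D E F → PP.Concur pa qb rc

end ProjectivePlane

/-- If `A B C` is a triangle with sides `bc, ca, ab`, then these three sides are not
concurrent (no point lies on all three). -/
lemma tri_dual {Pt Ln : Type} (PP : ProjectivePlane Pt Ln) {A B C : Pt} {bc ca ab : Ln}
    (hT : PP.Triangle A B C)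
    (hAca : PP.incid A ca) (hAab : PP.incid A ab)
    (hBab : PP.incid B ab) (hBbc : PP.incid B bc)
    (hCbc : PP.incid C bc) (hCca : PP.incid C ca) :
    ∀ m : Pt, ¬(PP.incid m bc ∧ PP.incid m ca ∧ PP.incid m ab) := by
  rintro m ⟨h1, h2, h3⟩
  by_cases hm : m = A
  · subst hm; exact hT bc ⟨h1, hBbc, hCbc⟩
  · obtain ⟨l, hl, hu⟩ := PP.join_unique A m (Ne.symm hm)
    have hca := hu ca ⟨hAca, h2⟩
    have hab := hu ab ⟨hAab, h3⟩
    have hBca : PP.incid B ca := by rw [hca, ← hab]; exact hBab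
    exact hT ca ⟨hAca, hBca, hCca⟩

/-- Dualizing a Bricard configuration: the sides of the two triangles become the vertices
of the dual triangles (in swapped order), the vertices become the sides, `P Q R` become the
joins, `aa' bb' cc'` become the intersection points `P Q R`, and `pa qb rc` and `D E F`
swap roles. -/
lemma config_dual {Pt Ln : Type} (PP : ProjectivePlane Pt Ln) (DP : ProjectivePlane Ln Pt)
    (h : ∀ (m : Ln) (A : Pt), DP.incid m A ↔ PP.incid A m)
    {A B C A' B' C' : Pt} {bc ca ab bc' ca' ab' aa' bb' cc' : Ln}
    {P Q R D E F : Pt} {pa qb rc : Ln}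
    (hC : PP.BricardConfig A B C A' B' C' bc ca ab bc' ca' ab' aa' bb' cc' P Q R D E F
      pa qb rc) :
    DP.BricardConfig bc' ca' ab' bc ca ab A' B' C' A B C P Q R aa' bb' cc'
      pa qb rc D E F := by
  obtain ⟨hT1, hT2, hBbc, hCbc, hCca, hAca, hAab, hBab,
    hB'bc', hC'bc', hC'ca', hA'ca', hA'ab', hB'ab',
    hAaa', hA'aa', hBbb', hB'bb', hCcc', hC'cc',
    hPbc, hPbc', hQca, hQca', hRab, hRab',
    hDbc, hDaa', hEca, hEbb', hFab, hFcc',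
    hA'pa, hPpa, hB'qb, hQqb, hC'rc, hRrc⟩ := hC
  unfold ProjectivePlane.BricardConfig ProjectivePlane.Triangle
  simp only [h]
  exact ⟨tri_dual PP hT2 hA'ca' hA'ab' hB'ab' hB'bc' hC'bc' hC'ca',
    tri_dual PP hT1 hAca hAab hBab hBbc hCbc hCca,
    hA'ca', hA'ab', hB'ab', hB'bc', hC'bc', hC'ca',
    hAca, hAab, hBab, hBbc, hCbc, hCca,
    hPbc', hPbc, hQca', hQca, hRab', hRab,
    hA'aa', hAaa', hB'bb', hBbb', hC'cc', hCcc',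
    hA'pa, hPpa, hB'qb, hQqb, hC'rc, hRrc,
    hDbc, hDaa', hEca, hEbb', hFab, hFcc'⟩

/-- In any projective plane, the converse Bricard property holds iff the Bricard property
holds in the dual plane (the plane whose points are the lines of the original plane, whose
lines are its points, and whose incidence is the reversed one); i.e. the dual statement of
the Bricard property is the converse Bricard property. -/
theorem stmt13 :
    ∀ (Pt Ln : Type) (PP : ProjectivePlane Pt Ln) (DP : ProjectivePlane Ln Pt),
      (∀ (m : Ln) (A : Pt), DP.incid m A ↔ PP.incid A m) →
      (DP.Bricard ↔ PP.ConverseBricard) := by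
  intro Pt Ln PP DP h
  constructor
  · -- Bricard in the dual plane implies converse Bricard in the original plane.
    intro hB A B C A' B' C' bc ca ab bc' ca' ab' aa' bb' cc' P Q R D E F pa qb rc hC hDEF
    have hdual := config_dual PP DP h hC
    have hcon : DP.Concur D E F := by
      obtain ⟨m, h1, h2, h3⟩ := hDEF
      exact ⟨m, (h _ _).mpr h1, (h _ _).mpr h2, (h _ _).mpr h3⟩
    obtain ⟨m, h1, h2, h3⟩ := hB _ _ _ _ _ _ _ _ _ _ _ _ _ _ _ _ _ _ _ _ _ _ _ _ hdual hcon
    exact ⟨m, (h _ _).mp h1, (h _ _).mp h2, (h _ _).mp h3⟩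
  · -- Converse Bricard in the original plane implies Bricard in the dual plane.
    intro hCB A B C A' B' C' bc ca ab bc' ca' ab' aa' bb' cc' P Q R D E F pa qb rc hC hcon
    have h' : ∀ (m : Pt) (A : Ln), PP.incid m A ↔ DP.incid A m := fun m A => (h A m).symm
    have hdual := config_dual DP PP h' hC
    have hcol : PP.Collin pa qb rc := by
      obtain ⟨O, h1, h2, h3⟩ := hcon
      exact ⟨O, (h _ _).mp h1, (h _ _).mp h2, (h _ _).mp h3⟩
    obtain ⟨O, h1, h2, h3⟩ := hCB _ _ _ _ _ _ _ _ _ _ _ _ _ _ _ _ _ _ _ _ _ _ _ _ hdual hcol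
    exact ⟨O, (h _ _).mpr h1, (h _ _).mpr h2, (h _ _).mpr h3⟩
end
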